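/- Let Z be a standard normal random variable and define h₁(a) = E[exp(−(a − Z²/2)_+)] for a ∈ ℝ. Then h₁(a) = 2·e^{−a}·√(a/π) + 2·(1 − Φ(√(2a))) for all a > 0. -/

import Mathlib

open MeasureTheory ProbabilityTheory Real Set
open scoped ENNReal NNReal

/-- The standard normal cumulative distribution function. -/
noncomputable def stdPhi (x : ℝ) : ℝ := ((gaussianReal 0 1) (Set.Iic x)).toReal

/-- `h₁(a) = E[exp(−(a − Z²/2)_+)]` for `Z` standard normal. -/
noncomputable def h1 (a : ℝ) : ℝ :=
  ∫ z, Real.exp (-(max (a - z^2/2) 0)) ∂(gaussianReal 0 1)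

lemma gauss_integral_eq (f : ℝ → ℝ) :
    ∫ z, f z ∂(gaussianReal 0 1) = ∫ z, gaussianPDFReal 0 1 z * f z := by
  rw [gaussianReal_of_var_ne_zero 0 one_ne_zero,
    show gaussianPDF 0 1 = fun x => ((Real.toNNReal (gaussianPDFReal 0 1 x) : ℝ≥0) : ℝ≥0∞) from
      rfl,
    integral_withDensity_eq_integral_smul ((measurable_gaussianPDFReal 0 1).real_toNNReal) f]
  congr 1
  ext x
  rw [NNReal.smul_def, smul_eq_mul, Real.coe_toNNReal _ (gaussianPDFReal_nonneg 0 1 x)]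

lemma stdPhi_eq (x : ℝ) : stdPhi x = ∫ z in Iic x, gaussianPDFReal 0 1 z := by
  rw [stdPhi, gaussianReal_apply_eq_integral 0 one_ne_zero,
    ENNReal.toReal_ofReal (integral_nonneg fun z => gaussianPDFReal_nonneg 0 1 z)]

lemma pdf_even (x : ℝ) : gaussianPDFReal 0 1 (-x) = gaussianPDFReal 0 1 x := by
  simp [gaussianPDFReal]

/-- For all `a > 0`, `h₁(a) = 2·e^{−a}·√(a/π) + 2·(1 − Φ(√(2a)))`. -/
theorem h1_eq (a : ℝ) (ha : 0 < a) :
    h1 a = 2 * Real.exp (-a) * Real.sqrt (a/π) + 2 * (1 - stdPhi (Real.sqrt (2*a))) := by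
  set s := Real.sqrt (2*a) with hs
  have hs0 : 0 < s := Real.sqrt_pos.mpr (by linarith)
  have hss : s ^ 2 = 2 * a := Real.sq_sqrt (by linarith)
  set g : ℝ → ℝ := gaussianPDFReal 0 1 with hg
  set f : ℝ → ℝ := fun z => Real.exp (-(max (a - z^2/2) 0)) with hf
  have hgnn : ∀ z, 0 ≤ g z := gaussianPDFReal_nonneg 0 1
  have hgint : Integrable g := integrable_gaussianPDFReal 0 1
  have hfm : Measurable f := by
    apply Measurable.exp
    exact (((measurable_const.sub ((measurable_id.pow_const 2).div_const 2)).max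
      measurable_const)).neg
  have hGint : Integrable (fun z => g z * f z) := by
    have := hgint.bdd_mul hfm.aestronglyMeasurable
      (c := 1) (Filter.Eventually.of_forall fun x => by
        rw [Real.norm_eq_abs, abs_of_nonneg (Real.exp_nonneg _)]
        exact Real.exp_le_one_iff.mpr (neg_nonpos.mpr (le_max_right _ _)))
    simpa [mul_comm] using this
  have key : h1 a = ∫ z, g z * f z := gauss_integral_eq f
  -- split
  have hsplit : ∫ z, g z * f z =
      (∫ z in Icc (-s) s, g z * f z) + ∫ z in (Icc (-s) s)ᶜ, g z * f z :=
    (integral_add_compl measurableSet_Icc hGint).symm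
  -- first piece
  have h1p : ∫ z in Icc (-s) s, g z * f z = 2 * Real.exp (-a) * Real.sqrt (a/π) := by
    have hcong : ∀ z ∈ Icc (-s) s, g z * f z = (Real.sqrt (2*π))⁻¹ * Real.exp (-a) := by
      intro z hz
      have hz2 : z ^ 2 ≤ 2 * a := by
        rw [← hss]
        exact sq_le_sq' hz.1 hz.2
      have hmax : max (a - z^2/2) 0 = a - z^2/2 := max_eq_left (by linarith)
      simp only [hf, hg, hmax, gaussianPDFReal, NNReal.coe_one, mul_one, sub_zero]
      rw [mul_assoc, ← Real.exp_add]
      congr 2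
      ring
    rw [setIntegral_congr_fun measurableSet_Icc hcong, setIntegral_const, Real.volume_real_Icc_of_le (by linarith),
      smul_eq_mul]
    have h2pi : (0:ℝ) < 2 * π := by positivity
    have : Real.sqrt (a/π) = s / Real.sqrt (2*π) := by
      rw [hs, ← Real.sqrt_div (by positivity : (0:ℝ) ≤ 2*a) (2*π),
        mul_div_mul_left a π two_ne_zero]
    rw [this]
    field_simp
    ring
  -- second piece
  have hcong2 : ∀ z ∈ (Icc (-s) s)ᶜ, g z * f z = g z := by
    intro z hz
    rw [mem_compl_iff, mem_Icc, not_and_or, not_le, not_le] at hz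
    have hz2 : 2 * a < z ^ 2 := by
      rw [← hss]
      rcases hz with h | h
      · nlinarith
      · nlinarith
    have hmax : max (a - z^2/2) 0 = 0 := max_eq_right (by linarith)
    simp [hf, hmax]
  have hcompl : (Icc (-s) s)ᶜ = Iio (-s) ∪ Ioi s := by ext x; simp only [Set.mem_compl_iff, Set.mem_Icc, not_and_or, not_le, Set.mem_union, Set.mem_Iio, Set.mem_Ioi]
  have hdisj : Disjoint (Iio (-s)) (Ioi s) := by
    refine Set.disjoint_left.mpr fun x hx hx' => ?_
    simp only [mem_Iio] at hx
    simp only [mem_Ioi] at hx'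
    linarith
  have hIio : ∫ z in Iio (-s), g z = ∫ z in Ioi s, g z := by
    have h2 : ∫ x in Iic (-s), g (-x) = ∫ x in Ioi (-(-s)), g x := integral_comp_neg_Iic (-s) g
    simp only [neg_neg] at h2
    rw [setIntegral_congr_set Iio_ae_eq_Iic, ← h2]
    exact setIntegral_congr_fun measurableSet_Iic fun x _ => (pdf_even x).symm
  have htail : ∫ z in Ioi s, g z = 1 - stdPhi s := by
    have := integral_add_compl (measurableSet_Iic (a := s)) hgint
    rw [compl_Iic] at this
    rw [← stdPhi_eq] at this
    have h1' : ∫ z, g z = 1 := integral_gaussianPDFReal_eq_one 0 one_ne_zero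
    linarith [this, h1']
  have h2p : ∫ z in (Icc (-s) s)ᶜ, g z * f z = 2 * (1 - stdPhi s) := by
    rw [setIntegral_congr_fun (measurableSet_Icc.compl) hcong2, hcompl,
      setIntegral_union hdisj measurableSet_Ioi hgint.integrableOn hgint.integrableOn,
      hIio, htail]
    ring
  rw [key, hsplit, h1p, h2p]
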